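/- arXiv:2108.08715 — 2 statements merged into one kernel-verified Lean document; each statement's English description precedes it below -/
import Mathlib

section
/- Let φ_∞ : ℝⁿ → ℝ and g_∞ : ℝⁿ → ℝ^m be the corrected model cost and constraint functions, and φ_p, g_p the plant cost and constraints, all continuously differentiable. Suppose u_∞ is a KKT point of the problem min φ_∞(u) subject to g_∞(u) ≤ 0 with multiplier λ ∈ ℝ^m, and at u_∞ the matching conditions hold: g_∞(u_∞) = g_p(u_∞), ∇g_∞(u_∞) = ∇g_p(u_∞), and ∇φ_∞(u_∞) = ∇φ_p(u_∞). Then (u_∞, λ) is a KKT point of the plant problem min φ_p(u) subject to g_p(u) ≤ 0; that is, g_p(u_∞) ≤ 0, λ ≥ 0, λᵀ g_p(u_∞) = 0, and ∇φ_p(u_∞) + (∇g_p(u_∞))ᵀ λ = 0. -/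
/-- KKT transfer: if `uInf` is a KKT point of the corrected model problem with
multiplier `lam`, and the corrected model matches the plant to first order at
`uInf`, then `(uInf, lam)` is a KKT point of the plant problem. -/
theorem kkt_matching_transfer
    {n m : ℕ}
    (phiInf phip : (Fin n → ℝ) → ℝ)
    (gInf gp : (Fin n → ℝ) → Fin m → ℝ)
    (hphiInf : ContDiff ℝ 1 phiInf) (hphip : ContDiff ℝ 1 phip)
    (hgInf : ∀ i, ContDiff ℝ 1 (fun u => gInf u i))
    (hgp : ∀ i, ContDiff ℝ 1 (fun u => gp u i))
    (uInf : Fin n → ℝ) (lam : Fin m → ℝ)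
    -- KKT conditions for the corrected model problem
    (hfeas : ∀ i, gInf uInf i ≤ 0)
    (hdual : ∀ i, 0 ≤ lam i)
    (hcomp : ∑ i, lam i * gInf uInf i = 0)
    (hstat : fderiv ℝ phiInf uInf
      + ∑ i, lam i • fderiv ℝ (fun u => gInf u i) uInf = 0)
    -- first-order matching conditions at uInf
    (hval : gInf uInf = gp uInf)
    (hgrad : ∀ i, fderiv ℝ (fun u => gInf u i) uInf
      = fderiv ℝ (fun u => gp u i) uInf)
    (hgradphi : fderiv ℝ phiInf uInf = fderiv ℝ phip uInf) :
    (∀ i, gp uInf i ≤ 0) ∧ (∀ i, 0 ≤ lam i) ∧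
    (∑ i, lam i * gp uInf i = 0) ∧
    (fderiv ℝ phip uInf + ∑ i, lam i • fderiv ℝ (fun u => gp u i) uInf = 0) := by
  refine ⟨fun i => hval ▸ hfeas i, hdual, ?_, ?_⟩
  · rw [← hval]; exact hcomp
  · rw [← hgradphi]
    have : ∀ i ∈ Finset.univ, lam i • fderiv ℝ (fun u => gp u i) uInf
        = lam i • fderiv ℝ (fun u => gInf u i) uInf := fun i _ => by rw [hgrad i]
    rw [Finset.sum_congr rfl this]; exact hstat
end

section
/- Let g_p : ℝⁿ → ℝ^m be the plant constraints and g, g^c : ℝⁿ → ℝ^m updated model constraints satisfying at a point u_k: g(u_k) = g^c(u_k) = g_p(u_k) and ∇g(u_k) = ∇g^c(u_k) = ∇g_p(u_k). Let filt be C¹ with filt(u_k) > 0 and define G(u) = g(u_k + filt(u)(u − u_k)). Define the cone of feasible directions of the plant at a feasible u_k as CFD_p = {d : ∇g_{p,i}(u_k)ᵀ d < 0 for all i with g_{p,i}(u_k) = 0}, and the cone CFD of the combined system {g^c ≤ 0, G ≤ 0} analogously using the gradients of g^c and G at u_k. Then CFD_p = CFD. -/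
/-- Equality of cones of feasible directions: if the updated model constraints
`g`, their convexifications `gc` and the plant constraints `gp` agree in value
and gradient at `u_k`, and `filt u_k > 0`, then the cone of feasible
directions of the plant at the feasible point `u_k` equals the cone of
feasible directions of the combined system `{gc ≤ 0, G ≤ 0}` where
`G u = g (u_k + filt u • (u − u_k))`. -/
theorem cones_of_feasible_directions_eq
    {n m : ℕ}
    (gp g gc : (Fin n → ℝ) → Fin m → ℝ)
    (hgp : ∀ i, ContDiff ℝ 1 (fun u => gp u i))
    (hg : ∀ i, ContDiff ℝ 1 (fun u => g u i))
    (hgc : ∀ i, ContDiff ℝ 1 (fun u => gc u i))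
    (filt : (Fin n → ℝ) → ℝ) (hfilt : ContDiff ℝ 1 filt)
    (uk : Fin n → ℝ)
    (hfeas : ∀ i, gp uk i ≤ 0)
    (hfiltpos : 0 < filt uk)
    (hval : ∀ i, g uk i = gp uk i ∧ gc uk i = gp uk i)
    (hgrad : ∀ i,
      fderiv ℝ (fun u => g u i) uk = fderiv ℝ (fun u => gp u i) uk ∧
      fderiv ℝ (fun u => gc u i) uk = fderiv ℝ (fun u => gp u i) uk) :
    let G : (Fin n → ℝ) → Fin m → ℝ :=
      fun u => g (uk + filt u • (u - uk))
    {d : Fin n → ℝ | ∀ i, gp uk i = 0 →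
        fderiv ℝ (fun u => gp u i) uk d < 0} =
    {d : Fin n → ℝ |
        (∀ i, gc uk i = 0 → fderiv ℝ (fun u => gc u i) uk d < 0) ∧
        (∀ i, G uk i = 0 → fderiv ℝ (fun u => G u i) uk d < 0)} := by
  intro G
  have hukeq : uk + filt uk • (uk - uk) = uk := by simp
  have hGval : ∀ i, G uk i = gp uk i := by
    intro i
    have : G uk i = g uk i := by simp only [G, hukeq]
    rw [this, (hval i).1]
  have hGderiv : ∀ i d, fderiv ℝ (fun u => G u i) uk d =
      filt uk * fderiv ℝ (fun u => gp u i) uk d := by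
    intro i d
    have hinner : HasFDerivAt (fun u : Fin n → ℝ => uk + filt u • (u - uk))
        (filt uk • ContinuousLinearMap.id ℝ (Fin n → ℝ)) uk := by
      have h1 : HasFDerivAt (fun u : Fin n → ℝ => filt u • (u - uk))
          (filt uk • ContinuousLinearMap.id ℝ (Fin n → ℝ)
            + (fderiv ℝ filt uk).smulRight (uk - uk)) uk :=
        ((hfilt.differentiable one_ne_zero uk).hasFDerivAt).smul
          ((hasFDerivAt_id uk).sub_const uk)
      have h2 := h1.const_add uk
      have h3 : (fderiv ℝ filt uk).smulRight (uk - uk) = 0 := by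
        ext x j; simp
      simpa only [h3, add_zero] using h2
    have hgd : HasFDerivAt (fun u => g u i) (fderiv ℝ (fun u => g u i) uk)
        (uk + filt uk • (uk - uk)) := by
      rw [hukeq]
      exact ((hg i).differentiable one_ne_zero uk).hasFDerivAt
    have hcomp := hgd.comp uk hinner
    have heq := hcomp.fderiv
    have : fderiv ℝ (fun u => G u i) uk =
        (fderiv ℝ (fun u => g u i) uk).comp
          (filt uk • ContinuousLinearMap.id ℝ (Fin n → ℝ)) := heq
    rw [this, (hgrad i).1]
    simp
  ext d
  simp only [Set.mem_setOf_eq]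
  constructor
  · intro h
    constructor
    · intro i hi
      rw [(hgrad i).2]
      exact h i ((hval i).2 ▸ hi)
    · intro i hi
      rw [hGderiv i d]
      exact mul_neg_of_pos_of_neg hfiltpos (h i (by rw [← hGval i]; exact hi))
  · rintro ⟨h1, _⟩ i hi
    rw [← (hgrad i).2]
    exact h1 i (by rw [(hval i).2]; exact hi)
end
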